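/- arXiv:1404.3395 — 3 statements merged into one kernel-verified Lean document; each statement's English description precedes it below -/
import Mathlib

section
/- For integers n ≥ 2 and 1 ≤ k ≤ n-1, the set S₂(n,k) of nested sets of cardinality k in P₂({1,...,n}) is in bijection with the set T₂(n+k-1,k) of partitions of {1,...,n+k-1} into k parts each of cardinality at least 2. -/
/-- A nested set of `P₂({1,...,n})` with `k` elements: a family of subsets of
`{1,...,n}`, each of cardinality ≥ 2, containing `{1,...,n}`, any two of which
are nested or disjoint. -/
def IsNested2 (n k : ℕ) (S : Finset (Finset ℕ)) : Prop :=
  S.card = k ∧ Finset.Icc 1 n ∈ S ∧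
  (∀ A ∈ S, A ⊆ Finset.Icc 1 n ∧ 2 ≤ A.card) ∧
  (∀ A ∈ S, ∀ B ∈ S, A ⊆ B ∨ B ⊆ A ∨ Disjoint A B)

/-- A partition of `{1,...,m}` into `k` blocks, each of cardinality ≥ 2. -/
def IsPart2 (m k : ℕ) (P : Finset (Finset ℕ)) : Prop :=
  P.card = k ∧ (∀ A ∈ P, 2 ≤ A.card) ∧
  (∀ A ∈ P, ∀ B ∈ P, A ≠ B → Disjoint A B) ∧
  P.biUnion id = Finset.Icc 1 m


open Finset

/-- generalized nested set on ground `V` -/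
def NS (V : Finset ℕ) (k : ℕ) (S : Finset (Finset ℕ)) : Prop :=
  S.card = k ∧ V ∈ S ∧ (∀ A ∈ S, A ⊆ V ∧ 2 ≤ A.card) ∧
  (∀ A ∈ S, ∀ B ∈ S, A ⊆ B ∨ B ⊆ A ∨ Disjoint A B)

/-- generalized partition of ground `W` -/
def PT (W : Finset ℕ) (k : ℕ) (P : Finset (Finset ℕ)) : Prop :=
  P.card = k ∧ (∀ A ∈ P, 2 ≤ A.card) ∧
  (∀ A ∈ P, ∀ B ∈ P, A ≠ B → Disjoint A B) ∧
  P.biUnion id = W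

noncomputable def pick (T : Finset (Finset ℕ)) : Finset ℕ :=
  (T.filter (fun A => A.min = (T.biUnion id).min)).sup id

lemma pick_eq {T : Finset (Finset ℕ)} {B : Finset ℕ} (hB : B ∈ T)
    (hlt : ∀ C ∈ T, C ≠ B → B.min < C.min) : pick T = B := by
  have hg : (T.biUnion id).min = B.min := by
    apply le_antisymm
    · rcases B.eq_empty_or_nonempty with h | h
      · simp [h]
      · have hmem : B.min' h ∈ T.biUnion id := mem_biUnion.2 ⟨B, hB, B.min'_mem h⟩
        have h2 := Finset.min_le hmem
        rwa [← Finset.coe_min' h]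
    · apply Finset.le_min
      intro a ha
      rcases mem_biUnion.1 ha with ⟨C, hC, haC⟩
      rcases eq_or_ne C B with rfl | hne
      · exact Finset.min_le haC
      · exact le_of_lt (lt_of_lt_of_le (hlt C hC hne) (Finset.min_le haC))
  have hfilter : T.filter (fun A => A.min = (T.biUnion id).min) = {B} := by
    ext A
    simp only [mem_filter, mem_singleton]
    constructor
    · rintro ⟨hA, hmin⟩
      by_contra hne
      have := hlt A hA hne
      rw [hmin, hg] at this
      exact lt_irrefl _ this
    · rintro rfl; exact ⟨hB, hg.symm⟩
  rw [pick, hfilter, Finset.sup_singleton, id]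

/-- if T consists of pairwise disjoint nonempty sets, pick T is the member with least min -/
lemma pick_spec {T : Finset (Finset ℕ)} (hT : T.Nonempty)
    (hne : ∀ C ∈ T, C.Nonempty)
    (hdisj : ∀ C ∈ T, ∀ D ∈ T, C ≠ D → Disjoint C D) :
    pick T ∈ T ∧ ∀ C ∈ T, C ≠ pick T → (pick T).min < C.min := by
  obtain ⟨B, hB, hBmin⟩ := T.exists_min_image Finset.min hT
  have hlt : ∀ C ∈ T, C ≠ B → B.min < C.min := by
    intro C hC hne'
    rcases lt_or_eq_of_le (hBmin C hC) with h | h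
    · exact h
    · exfalso
      obtain ⟨b, hb⟩ := hne B hB
      have hBne : B.min = (B.min' ⟨b, hb⟩ : ℕ) := (Finset.coe_min' _).symm
      have hmem : B.min' ⟨b, hb⟩ ∈ C := by
        have : (↑(B.min' ⟨b, hb⟩) : WithTop ℕ) = C.min := by rw [← hBne, h]
        have := Finset.mem_of_min this.symm
        exact this
      have hmemB : B.min' ⟨b, hb⟩ ∈ B := Finset.min'_mem _ _
      exact Finset.disjoint_left.1 (hdisj C hC B hB hne') hmem hmemB
  rw [pick_eq hB hlt]
  exact ⟨hB, hlt⟩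

/-- contraction and expansion of a block -/
def con (A : Finset ℕ) (t : ℕ) (B : Finset ℕ) : Finset ℕ :=
  if A ⊆ B then insert t (B \ A) else B

def expa (A : Finset ℕ) (t : ℕ) (B : Finset ℕ) : Finset ℕ :=
  if t ∈ B then (B.erase t) ∪ A else B

lemma expa_con {A B : Finset ℕ} {t : ℕ} (hA : A.Nonempty) (htB : t ∉ B)
    (h : A ⊆ B ∨ Disjoint A B) : expa A t (con A t B) = B := by
  rcases h with h | h
  · rw [con, if_pos h, expa, if_pos (mem_insert_self _ _)]
    rw [Finset.erase_insert (by simp [htB]), Finset.sdiff_union_of_subset h]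
  · have hns : ¬ A ⊆ B := fun hs => by
      obtain ⟨a, ha⟩ := hA
      exact Finset.disjoint_left.1 h ha (hs ha)
    rw [con, if_neg hns, expa, if_neg htB]

lemma con_expa {A B : Finset ℕ} {t : ℕ} (hA : A.Nonempty) (hdisj : Disjoint A B)
    (htA : t ∉ A) : con A t (expa A t B) = B := by
  by_cases ht : t ∈ B
  · rw [expa, if_pos ht, con, if_pos (Finset.subset_union_right)]
    have h1 : (B.erase t ∪ A) \ A = B.erase t := by
      rw [Finset.union_sdiff_right]
      apply Finset.sdiff_eq_self_of_disjoint
      exact Finset.disjoint_left.2 fun x hx hxA =>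
        Finset.disjoint_left.1 hdisj hxA (Finset.mem_of_mem_erase hx)
    rw [h1, Finset.insert_erase ht]
  · rw [expa, if_neg ht, con, if_neg]
    intro hs
    obtain ⟨a, ha⟩ := hA
    exact Finset.disjoint_left.1 hdisj ha (hs ha)

lemma expa_mono {A : Finset ℕ} {t : ℕ} {B C : Finset ℕ} (h : B ⊆ C) :
    expa A t B ⊆ expa A t C := by
  unfold expa
  by_cases htB : t ∈ B
  · rw [if_pos htB, if_pos (h htB)]
    exact Finset.union_subset_union (Finset.erase_subset_erase _ h) Finset.Subset.rfl
  · rw [if_neg htB]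
    by_cases htC : t ∈ C
    · rw [if_pos htC]
      exact fun x hx => Finset.mem_union_left _ (Finset.mem_erase.2 ⟨fun he => htB (he ▸ hx), h hx⟩)
    · rw [if_neg htC]; exact h

lemma con_mono {A : Finset ℕ} {t : ℕ} {B C : Finset ℕ} (hA : A.Nonempty)
    (hB : A ⊆ B ∨ Disjoint A B) (h : B ⊆ C) : con A t B ⊆ con A t C := by
  unfold con
  by_cases hAB : A ⊆ B
  · rw [if_pos hAB, if_pos (hAB.trans h)]
    exact Finset.insert_subset_insert _ (Finset.sdiff_subset_sdiff h Finset.Subset.rfl)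
  · rw [if_neg hAB]
    rcases hB with hB | hB
    · exact absurd hB hAB
    by_cases hAC : A ⊆ C
    · rw [if_pos hAC]
      exact fun x hx => Finset.mem_insert_of_mem (Finset.mem_sdiff.2 ⟨h hx,
        fun hxA => Finset.disjoint_left.1 hB hxA hx⟩)
    · rw [if_neg hAC]; exact h

open Classical in
noncomputable def mins (S : Finset (Finset ℕ)) : Finset (Finset ℕ) :=
  S.filter (fun C => ∀ B ∈ S, B ⊆ C → B = C)

open Classical in
lemma mem_mins {S : Finset (Finset ℕ)} {C : Finset ℕ} :
    C ∈ mins S ↔ C ∈ S ∧ ∀ B ∈ S, B ⊆ C → B = C := by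
  simp [mins]

section

variable {V : Finset ℕ} {t K : ℕ} {S : Finset (Finset ℕ)}

lemma NS.not_t_mem (hV : ∀ x ∈ V, x < t) (hS : NS V K S) {B : Finset ℕ} (hB : B ∈ S) : t ∉ B :=
  fun ht => lt_irrefl t (hV t ((hS.2.2.1 B hB).1 ht))

lemma NS.nonempty_mem (hS : NS V K S) {B : Finset ℕ} (hB : B ∈ S) : B.Nonempty :=
  Finset.card_pos.1 (by have := (hS.2.2.1 B hB).2; omega)

lemma mins_nonempty (hS : NS V K S) (hK : 1 ≤ K) : (mins S).Nonempty := by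
  have hSne : S.Nonempty := ⟨V, hS.2.1⟩
  obtain ⟨m, hm, hmin⟩ := S.exists_minimal hSne
  exact ⟨m, mem_mins.2 ⟨hm, fun B hB hsub => by
    by_contra hne
    exact hne (le_antisymm hsub (hmin hB hsub))⟩⟩

lemma mins_disjoint (hS : NS V K S) :
    ∀ C ∈ mins S, ∀ D ∈ mins S, C ≠ D → Disjoint C D := by
  intro C hC D hD hne
  rw [mem_mins] at hC hD
  rcases hS.2.2.2 C hC.1 D hD.1 with h | h | h
  · exact absurd (hD.2 C hC.1 h) hne
  · exact absurd (hC.2 D hD.1 h).symm hne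
  · exact h

/-- the canonical minimal element -/
lemma Astar_spec (hS : NS V K S) (hK : 1 ≤ K) :
    pick (mins S) ∈ S ∧ (∀ B ∈ S, B ⊆ pick (mins S) → B = pick (mins S)) ∧
    (∀ C ∈ S, (∀ B ∈ S, B ⊆ C → B = C) → C ≠ pick (mins S) →
      (pick (mins S)).min < C.min) := by
  obtain ⟨hmem, hlt⟩ := pick_spec (mins_nonempty hS hK)
    (fun C hC => hS.nonempty_mem (mem_mins.1 hC).1) (mins_disjoint hS)
  rw [mem_mins] at hmem
  exact ⟨hmem.1, hmem.2, fun C hC hCmin hne => hlt C (mem_mins.2 ⟨hC, hCmin⟩) hne⟩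

lemma Astar_ne_V (hS : NS V K S) (hK : 2 ≤ K) : pick (mins S) ≠ V := by
  obtain ⟨hmem, hmin, _⟩ := Astar_spec hS (by omega)
  intro h
  have hsub : S ⊆ {V} := fun B hB => by
    rw [Finset.mem_singleton]
    exact h ▸ hmin B hB (h ▸ (hS.2.2.1 B hB).1)
  have := Finset.card_le_card hsub
  rw [hS.1, Finset.card_singleton] at this
  omega

variable {A : Finset ℕ}

lemma ord_of_min (hS : NS V K S) (hA : A ∈ S) (hAmin : ∀ B ∈ S, B ⊆ A → B = A)
    {B : Finset ℕ} (hB : B ∈ S) (hne : B ≠ A) : A ⊆ B ∨ Disjoint A B := by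
  rcases hS.2.2.2 A hA B hB with h | h | h
  · exact Or.inl h
  · exact absurd (hAmin B hB h) hne
  · exact Or.inr h

lemma NS_con (hV : ∀ x ∈ V, x < t) (hS : NS V (K+1) S) (hA : A ∈ S)
    (hAmin : ∀ B ∈ S, B ⊆ A → B = A) (hAne : A ≠ V) :
    NS (insert t (V \ A)) K ((S.erase A).image (con A t)) := by
  have hAne2 : A.Nonempty := hS.nonempty_mem hA
  have hAV : A ⊆ V := (hS.2.2.1 A hA).1
  have hord : ∀ B ∈ S.erase A, A ⊆ B ∨ Disjoint A B := fun B hB =>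
    ord_of_min hS hA hAmin (Finset.mem_of_mem_erase hB) (Finset.ne_of_mem_erase hB)
  have hinj : Set.InjOn (con A t) (S.erase A : Set (Finset ℕ)) := by
    intro B hB C hC h
    have := congrArg (expa A t) h
    rwa [expa_con hAne2 (hS.not_t_mem hV (Finset.mem_of_mem_erase hB)) (hord B hB),
      expa_con hAne2 (hS.not_t_mem hV (Finset.mem_of_mem_erase hC)) (hord C hC)] at this
  refine ⟨?_, ?_, ?_, ?_⟩
  · rw [Finset.card_image_of_injOn hinj, Finset.card_erase_of_mem hA, hS.1]
    omega
  · refine Finset.mem_image.2 ⟨V, Finset.mem_erase.2 ⟨fun h => hAne h.symm, hS.2.1⟩, ?_⟩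
    rw [con, if_pos hAV]
  · intro X hX
    obtain ⟨B, hB, rfl⟩ := Finset.mem_image.1 hX
    have hBS := Finset.mem_of_mem_erase hB
    constructor
    · have h2 : con A t B ⊆ con A t V := con_mono hAne2 (hord B hB) (hS.2.2.1 B hBS).1
      rwa [show con A t V = insert t (V \ A) by rw [con, if_pos hAV]] at h2
    · rw [con]
      by_cases hAB : A ⊆ B
      · rw [if_pos hAB]
        have hne : (B \ A).Nonempty := by
          rw [Finset.sdiff_nonempty]
          intro h
          exact Finset.ne_of_mem_erase hB (hAmin B hBS h)
        rw [Finset.card_insert_of_notMem (fun ht =>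
          hS.not_t_mem hV hBS (Finset.mem_sdiff.1 ht).1)]
        have := Finset.card_pos.2 hne
        omega
      · rw [if_neg hAB]; exact (hS.2.2.1 B hBS).2
  · intro X hX Y hY
    obtain ⟨B, hB, rfl⟩ := Finset.mem_image.1 hX
    obtain ⟨C, hC, rfl⟩ := Finset.mem_image.1 hY
    have hBS := Finset.mem_of_mem_erase hB
    have hCS := Finset.mem_of_mem_erase hC
    rcases hS.2.2.2 B hBS C hCS with h | h | h
    · exact Or.inl (con_mono hAne2 (hord B hB) h)
    · exact Or.inr (Or.inl (con_mono hAne2 (hord C hC) h))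
    · refine Or.inr (Or.inr ?_)
      unfold con
      by_cases hAB : A ⊆ B <;> by_cases hAC : A ⊆ C
      · obtain ⟨a, ha⟩ := hAne2
        exact absurd (hAC ha) (Finset.disjoint_left.1 h (hAB ha))
      · rw [if_pos hAB, if_neg hAC]
        refine Finset.disjoint_left.2 fun x hx hxC => ?_
        rcases Finset.mem_insert.1 hx with rfl | hx
        · exact hS.not_t_mem hV hCS hxC
        · exact Finset.disjoint_left.1 h (Finset.mem_sdiff.1 hx).1 hxC
      · rw [if_neg hAB, if_pos hAC]
        refine Finset.disjoint_right.2 fun x hx hxB => ?_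
        rcases Finset.mem_insert.1 hx with rfl | hx
        · exact hS.not_t_mem hV hBS hxB
        · exact Finset.disjoint_right.1 h (Finset.mem_sdiff.1 hx).1 hxB
      · rw [if_neg hAB, if_neg hAC]; exact h

lemma roundtrip_S (hV : ∀ x ∈ V, x < t) (hS : NS V K S) (hA : A ∈ S)
    (hAmin : ∀ B ∈ S, B ⊆ A → B = A) :
    ((S.erase A).image (con A t)).image (expa A t) = S.erase A := by
  have hAne2 : A.Nonempty := hS.nonempty_mem hA
  rw [Finset.image_image]
  ext B
  simp only [Finset.mem_image, Function.comp]
  constructor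
  · rintro ⟨C, hC, rfl⟩
    rw [expa_con hAne2 (hS.not_t_mem hV (Finset.mem_of_mem_erase hC))
      (ord_of_min hS hA hAmin (Finset.mem_of_mem_erase hC) (Finset.ne_of_mem_erase hC))]
    exact hC
  · intro hB
    exact ⟨B, hB, expa_con hAne2 (hS.not_t_mem hV (Finset.mem_of_mem_erase hB))
      (ord_of_min hS hA hAmin (Finset.mem_of_mem_erase hB) (Finset.ne_of_mem_erase hB))⟩

end

section

variable {V : Finset ℕ} {t K : ℕ} {A : Finset ℕ} {S'' : Finset (Finset ℕ)}

lemma disj_of_subset_Va (hV : ∀ x ∈ V, x < t) (hAV : A ⊆ V) {M : Finset ℕ}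
    (hM : M ⊆ insert t (V \ A)) : Disjoint A M := by
  refine Finset.disjoint_left.2 fun x hxA hxM => ?_
  rcases Finset.mem_insert.1 (hM hxM) with rfl | hx
  · exact lt_irrefl x (hV x (hAV hxA))
  · exact (Finset.mem_sdiff.1 hx).2 hxA

lemma t_not_mem_A (hV : ∀ x ∈ V, x < t) (hAV : A ⊆ V) : t ∉ A :=
  fun h => lt_irrefl t (hV t (hAV h))

lemma expa_Va (hV : ∀ x ∈ V, x < t) (hAV : A ⊆ V) :
    expa A t (insert t (V \ A)) = V := by
  rw [expa, if_pos (Finset.mem_insert_self _ _),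
    Finset.erase_insert (fun h => lt_irrefl t (hV t (Finset.mem_sdiff.1 h).1)),
    Finset.sdiff_union_of_subset hAV]

lemma expa_inj_on (hV : ∀ x ∈ V, x < t) (hAV : A ⊆ V) (hAne2 : A.Nonempty)
    (hS'' : NS (insert t (V \ A)) K S'') :
    Set.InjOn (expa A t) (S'' : Set (Finset ℕ)) := by
  intro M hM N hN h
  have := congrArg (con A t) h
  rwa [con_expa hAne2 (disj_of_subset_Va hV hAV (hS''.2.2.1 M hM).1) (t_not_mem_A hV hAV),
    con_expa hAne2 (disj_of_subset_Va hV hAV (hS''.2.2.1 N hN).1) (t_not_mem_A hV hAV)] at this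

lemma A_not_mem_expa (hV : ∀ x ∈ V, x < t) (hAV : A ⊆ V)
    (hS'' : NS (insert t (V \ A)) K S'') : A ∉ S''.image (expa A t) := by
  intro h
  obtain ⟨M, hM, hMA⟩ := Finset.mem_image.1 h
  have hMVa := (hS''.2.2.1 M hM).1
  have hdisj := disj_of_subset_Va hV hAV hMVa
  by_cases ht : t ∈ M
  · -- expa M = erase t M ∪ A, and erase t M nonempty, disjoint from A
    have h2 : 2 ≤ M.card := (hS''.2.2.1 M hM).2
    have hne : (M.erase t).Nonempty := by
      rw [← Finset.card_pos, Finset.card_erase_of_mem ht]; omega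
    obtain ⟨x, hx⟩ := hne
    have hxM := Finset.mem_of_mem_erase hx
    have hxA : x ∈ A := by
      rw [← hMA, expa, if_pos ht]; exact Finset.mem_union_left _ hx
    exact Finset.disjoint_right.1 hdisj hxM hxA
  · rw [expa, if_neg ht] at hMA
    obtain ⟨x, hx⟩ := hS''.nonempty_mem hM
    exact Finset.disjoint_right.1 hdisj hx (hMA ▸ hx)

lemma con_expa_image (hV : ∀ x ∈ V, x < t) (hAV : A ⊆ V) (hAne2 : A.Nonempty)
    (hS'' : NS (insert t (V \ A)) K S'') :
    (S''.image (expa A t)).image (con A t) = S'' := by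
  rw [Finset.image_image]
  ext M
  simp only [Finset.mem_image, Function.comp]
  constructor
  · rintro ⟨N, hN, rfl⟩
    rw [con_expa hAne2 (disj_of_subset_Va hV hAV (hS''.2.2.1 N hN).1) (t_not_mem_A hV hAV)]
    exact hN
  · intro hM
    exact ⟨M, hM, con_expa hAne2 (disj_of_subset_Va hV hAV (hS''.2.2.1 M hM).1)
      (t_not_mem_A hV hAV)⟩

lemma NS_expa (hV : ∀ x ∈ V, x < t) (hAV : A ⊆ V) (hA2 : 2 ≤ A.card)
    (hS'' : NS (insert t (V \ A)) K S'') :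
    NS V (K+1) (insert A (S''.image (expa A t))) := by
  have hAne2 : A.Nonempty := Finset.card_pos.1 (by omega)
  have htA := t_not_mem_A hV hAV
  refine ⟨?_, ?_, ?_, ?_⟩
  · rw [Finset.card_insert_of_notMem (A_not_mem_expa hV hAV hS''),
      Finset.card_image_of_injOn (expa_inj_on hV hAV hAne2 hS''), hS''.1]
  · refine Finset.mem_insert_of_mem (Finset.mem_image.2 ⟨insert t (V \ A), hS''.2.1, ?_⟩)
    exact expa_Va hV hAV
  · intro X hX
    rcases Finset.mem_insert.1 hX with rfl | hX
    · exact ⟨hAV, hA2⟩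
    obtain ⟨M, hM, rfl⟩ := Finset.mem_image.1 hX
    constructor
    · have := expa_mono (A := A) (t := t) (hS''.2.2.1 M hM).1
      rwa [expa_Va hV hAV] at this
    · rw [expa]
      by_cases ht : t ∈ M
      · rw [if_pos ht]
        exact le_trans hA2 (Finset.card_le_card Finset.subset_union_right)
      · rw [if_neg ht]; exact (hS''.2.2.1 M hM).2
  · have hsub : ∀ M ∈ S'', t ∉ M → M ⊆ V \ A := by
      intro M hM ht x hx
      rcases Finset.mem_insert.1 ((hS''.2.2.1 M hM).1 hx) with rfl | h
      · exact absurd hx ht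
      · exact h
    intro X hX Y hY
    rcases Finset.mem_insert.1 hX with rfl | hX <;> rcases Finset.mem_insert.1 hY with rfl | hY
    · exact Or.inl Finset.Subset.rfl
    · obtain ⟨M, hM, rfl⟩ := Finset.mem_image.1 hY
      by_cases ht : t ∈ M
      · refine Or.inl ?_
        rw [expa, if_pos ht]; exact Finset.subset_union_right
      · rw [expa, if_neg ht]
        exact Or.inr (Or.inr (Finset.disjoint_left.2 fun x hxA hxM =>
          (Finset.mem_sdiff.1 (hsub M hM ht hxM)).2 hxA))
    · obtain ⟨M, hM, rfl⟩ := Finset.mem_image.1 hX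
      by_cases ht : t ∈ M
      · refine Or.inr (Or.inl ?_)
        rw [expa, if_pos ht]; exact Finset.subset_union_right
      · rw [expa, if_neg ht]
        exact Or.inr (Or.inr (Finset.disjoint_right.2 fun x hxA hxM =>
          (Finset.mem_sdiff.1 (hsub M hM ht hxM)).2 hxA))
    · obtain ⟨M, hM, rfl⟩ := Finset.mem_image.1 hX
      obtain ⟨N, hN, rfl⟩ := Finset.mem_image.1 hY
      rcases hS''.2.2.2 M hM N hN with h | h | h
      · exact Or.inl (expa_mono h)
      · exact Or.inr (Or.inl (expa_mono h))
      · refine Or.inr (Or.inr ?_)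
        unfold expa
        by_cases htM : t ∈ M <;> by_cases htN : t ∈ N
        · exact absurd htN (Finset.disjoint_left.1 h htM)
        · rw [if_pos htM, if_neg htN]
          refine Finset.disjoint_right.2 fun x hxN hx => ?_
          rcases Finset.mem_union.1 hx with hx | hx
          · exact Finset.disjoint_left.1 h (Finset.mem_of_mem_erase hx) hxN
          · exact (Finset.mem_sdiff.1 (hsub N hN htN hxN)).2 hx
        · rw [if_neg htM, if_pos htN]
          refine Finset.disjoint_left.2 fun x hxM hx => ?_
          rcases Finset.mem_union.1 hx with hx | hx
          · exact Finset.disjoint_left.1 h hxM (Finset.mem_of_mem_erase hx)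
          · exact (Finset.mem_sdiff.1 (hsub M hM htM hxM)).2 hx
        · rw [if_neg htM, if_neg htN]; exact h

/-- characterization of minimal elements of the expanded family -/
lemma mins_expa (hV : ∀ x ∈ V, x < t) (hAV : A ⊆ V) (hA2 : 2 ≤ A.card)
    (hS'' : NS (insert t (V \ A)) K S'') (C : Finset ℕ) :
    (C ∈ insert A (S''.image (expa A t)) ∧
      ∀ B ∈ insert A (S''.image (expa A t)), B ⊆ C → B = C) ↔
    (C = A ∨ (C ∈ S'' ∧ t ∉ C ∧ ∀ B ∈ S'', B ⊆ C → B = C)) := by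
  have hAne2 : A.Nonempty := Finset.card_pos.1 (by omega)
  have htA := t_not_mem_A hV hAV
  have hsub : ∀ M ∈ S'', t ∉ M → Disjoint A M := fun M hM ht =>
    disj_of_subset_Va hV hAV (hS''.2.2.1 M hM).1
  have hexpaeq : ∀ M ∈ S'', t ∉ M → expa A t M = M := fun M hM ht => by
    rw [expa, if_neg ht]
  have hAsub : ∀ M ∈ S'', t ∈ M → A ⊆ expa A t M := fun M hM ht => by
    rw [expa, if_pos ht]; exact Finset.subset_union_right
  constructor
  · rintro ⟨hC, hmin⟩
    rcases Finset.mem_insert.1 hC with rfl | hC2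
    · exact Or.inl rfl
    obtain ⟨M, hM, rfl⟩ := Finset.mem_image.1 hC2
    by_cases ht : t ∈ M
    · exfalso
      have heq := hmin A (Finset.mem_insert_self _ _) (hAsub M hM ht)
      rw [← heq] at hC2
      exact A_not_mem_expa hV hAV hS'' hC2
    · rw [hexpaeq M hM ht] at hmin hC2 ⊢
      refine Or.inr ⟨hM, ht, fun B hB hBM => ?_⟩
      have h1 : expa A t B ⊆ M := by
        by_cases htB : t ∈ B
        · exact absurd (hBM htB) ht
        · rw [hexpaeq B hB htB]; exact hBM
      have := hmin (expa A t B) (Finset.mem_insert_of_mem (Finset.mem_image_of_mem _ hB)) h1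
      by_cases htB : t ∈ B
      · exact absurd (hBM htB) ht
      · rwa [hexpaeq B hB htB] at this
  · rintro (rfl | ⟨hC, htC, hmin⟩)
    · refine ⟨Finset.mem_insert_self _ _, fun B hB hBA => ?_⟩
      rcases Finset.mem_insert.1 hB with rfl | hB2
      · rfl
      obtain ⟨M, hM, rfl⟩ := Finset.mem_image.1 hB2
      by_cases ht : t ∈ M
      · exact Finset.Subset.antisymm hBA (hAsub M hM ht)
      · exfalso
        rw [hexpaeq M hM ht] at hBA
        obtain ⟨x, hx⟩ := hS''.nonempty_mem hM
        exact Finset.disjoint_right.1 (hsub M hM ht) hx (hBA hx)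
    · have hCV : C ⊆ V \ A := by
        intro x hx
        rcases Finset.mem_insert.1 ((hS''.2.2.1 C hC).1 hx) with rfl | h
        · exact absurd hx htC
        · exact h
      refine ⟨Finset.mem_insert_of_mem (Finset.mem_image.2 ⟨C, hC, hexpaeq C hC htC⟩),
        fun B hB hBC => ?_⟩
      rcases Finset.mem_insert.1 hB with rfl | hB2
      · exfalso
        obtain ⟨x, hx⟩ := hAne2
        exact (Finset.mem_sdiff.1 (hCV (hBC hx))).2 hx
      obtain ⟨M, hM, rfl⟩ := Finset.mem_image.1 hB2
      by_cases ht : t ∈ M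
      · exfalso
        obtain ⟨x, hx⟩ := hAne2
        exact (Finset.mem_sdiff.1 (hCV (hBC (hAsub M hM ht hx)))).2 hx
      · rw [hexpaeq M hM ht] at hBC ⊢
        exact hmin M hM hBC

end

section

variable {W : Finset ℕ} {K : ℕ} {P : Finset (Finset ℕ)} {B : Finset ℕ}

lemma PT.block_subset (hP : PT W K P) (hB : B ∈ P) : B ⊆ W := by
  intro x hx
  rw [← hP.2.2.2]
  exact Finset.mem_biUnion.2 ⟨B, hB, hx⟩

lemma PT.nonempty_mem (hP : PT W K P) (hB : B ∈ P) : B.Nonempty :=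
  Finset.card_pos.1 (by have := hP.2.1 B hB; omega)

lemma biUnion_erase (hP : PT W K P) (hB : B ∈ P) :
    (P.erase B).biUnion id = W \ B := by
  ext x
  simp only [Finset.mem_biUnion, Finset.mem_sdiff, id]
  constructor
  · rintro ⟨C, hC, hxC⟩
    have hCP := Finset.mem_of_mem_erase hC
    refine ⟨hP.block_subset hCP hxC, fun hxB => ?_⟩
    exact Finset.disjoint_left.1 (hP.2.2.1 C hCP B hB (Finset.ne_of_mem_erase hC)) hxC hxB
  · rintro ⟨hxW, hxB⟩
    rw [← hP.2.2.2] at hxW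
    obtain ⟨C, hC, hxC⟩ := Finset.mem_biUnion.1 hxW
    exact ⟨C, Finset.mem_erase.2 ⟨fun h => hxB (h ▸ hxC), hC⟩, hxC⟩

lemma PT_erase (hP : PT W (K+1) P) (hB : B ∈ P) : PT (W \ B) K (P.erase B) := by
  refine ⟨?_, fun C hC => hP.2.1 C (Finset.mem_of_mem_erase hC),
    fun C hC D hD h => hP.2.2.1 C (Finset.mem_of_mem_erase hC) D (Finset.mem_of_mem_erase hD) h,
    biUnion_erase hP hB⟩
  rw [Finset.card_erase_of_mem hB, hP.1]
  omega

variable {V : Finset ℕ} {t m : ℕ}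

lemma lfree_nonempty (hP : PT W (K+1) P) (hW : W = V ∪ Finset.Icc t m)
    (hV : ∀ x ∈ V, x < t) (hm : m + 1 ≤ t + K) :
    (P.filter (fun C => ∀ x ∈ C, x < t)).Nonempty := by
  rw [Finset.filter_nonempty_iff]
  by_contra h
  push_neg at h
  have hne : ∀ C ∈ P, ∃ x ∈ C, t ≤ x := by
    intro C hC
    obtain ⟨x, hx, hx2⟩ := h C hC
    exact ⟨x, hx, hx2⟩
  classical
  set g : Finset ℕ → ℕ := fun C => if h : ∃ x ∈ C, t ≤ x then h.choose else 0 with hg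
  have hg1 : ∀ C ∈ P, g C ∈ C ∧ t ≤ g C := by
    intro C hC
    have h' := hne C hC
    simp only [hg, dif_pos h']
    exact ⟨h'.choose_spec.1, h'.choose_spec.2⟩
  have hcard : P.card ≤ (Finset.Icc t m).card := by
    apply Finset.card_le_card_of_injOn g
    · intro C hC
      obtain ⟨h1, h2⟩ := hg1 C hC
      have := hP.block_subset hC h1
      rw [hW] at this
      rcases Finset.mem_union.1 this with h3 | h3
      · exact absurd (hV _ h3) (not_lt.2 h2)
      · exact h3
    · intro C hC D hD hEq
      by_contra hne'
      exact Finset.disjoint_left.1 (hP.2.2.1 C hC D hD hne') (hg1 C hC).1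
        (hEq ▸ (hg1 D hD).1)
  rw [hP.1, Nat.card_Icc] at hcard
  omega

lemma Bstar_spec (hP : PT W (K+1) P) (hW : W = V ∪ Finset.Icc t m)
    (hV : ∀ x ∈ V, x < t) (hm : m + 1 ≤ t + K) :
    pick (P.filter (fun C => ∀ x ∈ C, x < t)) ∈ P ∧
    (∀ x ∈ pick (P.filter (fun C => ∀ x ∈ C, x < t)), x < t) ∧
    (∀ C ∈ P, (∀ x ∈ C, x < t) → C ≠ pick (P.filter (fun C => ∀ x ∈ C, x < t)) →
      (pick (P.filter (fun C => ∀ x ∈ C, x < t))).min < C.min) := by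
  obtain ⟨hmem, hlt⟩ := pick_spec (lfree_nonempty hP hW hV hm)
    (fun C hC => hP.nonempty_mem (Finset.mem_of_mem_filter _ hC))
    (fun C hC D hD h => hP.2.2.1 C (Finset.mem_of_mem_filter _ hC)
      D (Finset.mem_of_mem_filter _ hD) h)
  rw [Finset.mem_filter] at hmem
  exact ⟨hmem.1, hmem.2, fun C hC hClt hne =>
    hlt C (Finset.mem_filter.2 ⟨hC, hClt⟩) hne⟩

end

section

variable {V A : Finset ℕ} {t u : ℕ}

lemma ground_split (hV : ∀ x ∈ V, x < t) (hAV : A ⊆ V) (htu : t ≤ u) :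
    (V ∪ Finset.Icc t u) \ A = insert t (V \ A) ∪ Finset.Icc (t+1) u := by
  ext x
  simp only [Finset.mem_sdiff, Finset.mem_union, Finset.mem_insert, Finset.mem_Icc]
  constructor
  · rintro ⟨h | h, hxA⟩
    · exact Or.inl (Or.inr ⟨h, hxA⟩)
    · rcases eq_or_lt_of_le h.1 with rfl | hlt
      · exact Or.inl (Or.inl rfl)
      · exact Or.inr ⟨hlt, h.2⟩
  · rintro ((rfl | ⟨h1, h2⟩) | ⟨h1, h2⟩)
    · exact ⟨Or.inr ⟨le_rfl, htu⟩, fun hxA => lt_irrefl x (hV x (hAV hxA))⟩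
    · exact ⟨Or.inl h1, h2⟩
    · exact ⟨Or.inr ⟨by omega, h2⟩, fun hxA => by
        have := hV x (hAV hxA); omega⟩

lemma ground_join (hV : ∀ x ∈ V, x < t) (hAV : A ⊆ V) (htu : t ≤ u) :
    A ∪ (insert t (V \ A) ∪ Finset.Icc (t+1) u) = V ∪ Finset.Icc t u := by
  ext x
  simp only [Finset.mem_union, Finset.mem_insert, Finset.mem_sdiff, Finset.mem_Icc]
  constructor
  · rintro (h | (rfl | ⟨h1, _⟩) | ⟨h1, h2⟩)
    · exact Or.inl (hAV h)
    · exact Or.inr ⟨le_rfl, htu⟩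
    · exact Or.inl h1
    · exact Or.inr ⟨by omega, h2⟩
  · rintro (h | ⟨h1, h2⟩)
    · by_cases hxA : x ∈ A
      · exact Or.inl hxA
      · exact Or.inr (Or.inl (Or.inr ⟨h, hxA⟩))
    · rcases eq_or_lt_of_le h1 with rfl | hlt
      · exact Or.inr (Or.inl (Or.inl rfl))
      · exact Or.inr (Or.inr ⟨by omega, h2⟩)

lemma disj_ground (hV : ∀ x ∈ V, x < t) (hAV : A ⊆ V) :
    Disjoint A (insert t (V \ A) ∪ Finset.Icc (t+1) u) := by
  refine Finset.disjoint_left.2 fun x hxA hx => ?_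
  have hxt := hV x (hAV hxA)
  rcases Finset.mem_union.1 hx with hx | hx
  · rcases Finset.mem_insert.1 hx with rfl | hx
    · exact lt_irrefl x hxt
    · exact (Finset.mem_sdiff.1 hx).2 hxA
  · have := (Finset.mem_Icc.1 hx).1; omega

end

section

variable {K t u : ℕ} {V : Finset ℕ}

lemma PT_insert (hV : ∀ x ∈ V, x < t) (htu : t ≤ u) {A : Finset ℕ} (hAV : A ⊆ V)
    (hA2 : 2 ≤ A.card) {Q : Finset (Finset ℕ)}
    (hQ : PT (insert t (V \ A) ∪ Finset.Icc (t+1) u) K Q) :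
    PT (V ∪ Finset.Icc t u) (K+1) (insert A Q) := by
  have hdisj : ∀ C ∈ Q, Disjoint A C := fun C hC =>
    Finset.disjoint_of_subset_right (hQ.block_subset hC) (disj_ground hV hAV)
  have hAne2 : A.Nonempty := Finset.card_pos.1 (by omega)
  have hAnot : A ∉ Q := fun h => by
    obtain ⟨x, hx⟩ := hAne2
    exact Finset.disjoint_left.1 (hdisj A h) hx hx
  refine ⟨?_, ?_, ?_, ?_⟩
  · rw [Finset.card_insert_of_notMem hAnot, hQ.1]
  · intro C hC
    rcases Finset.mem_insert.1 hC with rfl | hC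
    · exact hA2
    · exact hQ.2.1 C hC
  · intro C hC D hD hne
    rcases Finset.mem_insert.1 hC with rfl | hC'
    · rcases Finset.mem_insert.1 hD with rfl | hD'
      · exact absurd rfl hne
      · exact hdisj D hD'
    · rcases Finset.mem_insert.1 hD with rfl | hD'
      · exact (hdisj C hC').symm
      · exact hQ.2.2.1 C hC' D hD' hne
  · rw [Finset.biUnion_insert, hQ.2.2.2]
    exact ground_join hV hAV htu

lemma good_step (hK : 1 ≤ K) (ht : 1 ≤ t) (hu : u + 2 = t + (K+1))
    (hV : ∀ x ∈ V, x < t)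
    (E' : ∀ A : Finset ℕ, {S : Finset (Finset ℕ) // NS (insert t (V \ A)) K S} ≃
      {P : Finset (Finset ℕ) // PT (insert t (V \ A) ∪ Finset.Icc (t+1) u) K P})
    (hINV' : ∀ A S C, (C ∈ ((E' A) S).1 ∧ ∀ x ∈ C, x < t + 1) ↔
      (C ∈ S.1 ∧ ∀ B ∈ S.1, B ⊆ C → B = C)) :
    ∃ E : {S : Finset (Finset ℕ) // NS V (K+1) S} ≃
      {P : Finset (Finset ℕ) // PT (V ∪ Finset.Icc t u) (K+1) P},
      ∀ S C, (C ∈ (E S).1 ∧ ∀ x ∈ C, x < t) ↔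
        (C ∈ S.1 ∧ ∀ B ∈ S.1, B ⊆ C → B = C) := by
  have htu : t ≤ u := by omega
  -- forward data
  have hAmem : ∀ S : {S : Finset (Finset ℕ) // NS V (K+1) S}, pick (mins S.1) ∈ S.1 :=
    fun S => (Astar_spec S.2 (by omega)).1
  have hAmin : ∀ S : {S : Finset (Finset ℕ) // NS V (K+1) S},
      ∀ B ∈ S.1, B ⊆ pick (mins S.1) → B = pick (mins S.1) :=
    fun S => (Astar_spec S.2 (by omega)).2.1
  have hAlt : ∀ S : {S : Finset (Finset ℕ) // NS V (K+1) S},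
      ∀ C ∈ S.1, (∀ B ∈ S.1, B ⊆ C → B = C) → C ≠ pick (mins S.1) →
        (pick (mins S.1)).min < C.min :=
    fun S => (Astar_spec S.2 (by omega)).2.2
  have hAV : ∀ S : {S : Finset (Finset ℕ) // NS V (K+1) S}, pick (mins S.1) ⊆ V :=
    fun S => (S.2.2.2.1 _ (hAmem S)).1
  have hA2 : ∀ S : {S : Finset (Finset ℕ) // NS V (K+1) S}, 2 ≤ (pick (mins S.1)).card :=
    fun S => (S.2.2.2.1 _ (hAmem S)).2
  have hS'all : ∀ S : {S : Finset (Finset ℕ) // NS V (K+1) S},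
      NS (insert t (V \ pick (mins S.1))) K
        ((S.1.erase (pick (mins S.1))).image (con (pick (mins S.1)) t)) := fun S =>
    NS_con hV S.2 (hAmem S) (hAmin S) (Astar_ne_V S.2 (by omega))
  have hFPT : ∀ S : {S : Finset (Finset ℕ) // NS V (K+1) S},
      PT (V ∪ Finset.Icc t u) (K+1)
        (insert (pick (mins S.1)) (E' (pick (mins S.1)) ⟨_, hS'all S⟩).1) := fun S =>
    PT_insert hV htu (hAV S) (hA2 S) (E' (pick (mins S.1)) ⟨_, hS'all S⟩).2
  have hAnotQ : ∀ S : {S : Finset (Finset ℕ) // NS V (K+1) S},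
      pick (mins S.1) ∉ (E' (pick (mins S.1)) ⟨_, hS'all S⟩).1 := by
    intro S hmem
    obtain ⟨x, hx⟩ := Finset.card_pos.1 (show 0 < (pick (mins S.1)).card by have := hA2 S; omega)
    exact Finset.disjoint_left.1 (disj_ground hV (hAV S))
      hx ((E' (pick (mins S.1)) ⟨_, hS'all S⟩).2.block_subset hmem hx)
  have hSdecomp : ∀ S : {S : Finset (Finset ℕ) // NS V (K+1) S},
      insert (pick (mins S.1))
        (((S.1.erase (pick (mins S.1))).image (con (pick (mins S.1)) t)).image
          (expa (pick (mins S.1)) t)) = S.1 := fun S => by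
    rw [roundtrip_S hV S.2 (hAmem S) (hAmin S), Finset.insert_erase (hAmem S)]
  have hminchar : ∀ S : {S : Finset (Finset ℕ) // NS V (K+1) S}, ∀ C,
      (C ∈ S.1 ∧ ∀ B ∈ S.1, B ⊆ C → B = C) ↔
      (C = pick (mins S.1) ∨
        (C ∈ (S.1.erase (pick (mins S.1))).image (con (pick (mins S.1)) t) ∧ t ∉ C ∧
          ∀ B ∈ (S.1.erase (pick (mins S.1))).image (con (pick (mins S.1)) t),
            B ⊆ C → B = C)) := by
    intro S C
    have h := mins_expa hV (hAV S) (hA2 S) (hS'all S) C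
    rw [hSdecomp S] at h
    exact h
  -- backward data
  have hBspec : ∀ P : {P : Finset (Finset ℕ) // PT (V ∪ Finset.Icc t u) (K+1) P},
      pick (P.1.filter (fun C => ∀ x ∈ C, x < t)) ∈ P.1 ∧
      (∀ x ∈ pick (P.1.filter (fun C => ∀ x ∈ C, x < t)), x < t) ∧
      (∀ C ∈ P.1, (∀ x ∈ C, x < t) → C ≠ pick (P.1.filter (fun C => ∀ x ∈ C, x < t)) →
        (pick (P.1.filter (fun C => ∀ x ∈ C, x < t))).min < C.min) :=
    fun P => Bstar_spec P.2 rfl hV (by omega)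
  have hBV : ∀ P : {P : Finset (Finset ℕ) // PT (V ∪ Finset.Icc t u) (K+1) P},
      pick (P.1.filter (fun C => ∀ x ∈ C, x < t)) ⊆ V := by
    intro P x hx
    have h1 := P.2.block_subset (hBspec P).1 hx
    rcases Finset.mem_union.1 h1 with h | h
    · exact h
    · have := (Finset.mem_Icc.1 h).1
      have := (hBspec P).2.1 x hx
      omega
  have hB2 : ∀ P : {P : Finset (Finset ℕ) // PT (V ∪ Finset.Icc t u) (K+1) P},
      2 ≤ (pick (P.1.filter (fun C => ∀ x ∈ C, x < t))).card :=
    fun P => P.2.2.1 _ (hBspec P).1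
  have hP'all : ∀ P : {P : Finset (Finset ℕ) // PT (V ∪ Finset.Icc t u) (K+1) P},
      PT (insert t (V \ pick (P.1.filter (fun C => ∀ x ∈ C, x < t))) ∪ Finset.Icc (t+1) u) K
        (P.1.erase (pick (P.1.filter (fun C => ∀ x ∈ C, x < t)))) := by
    intro P
    have h := PT_erase P.2 (hBspec P).1
    rwa [ground_split hV (hBV P) htu] at h
  have hGNS : ∀ P : {P : Finset (Finset ℕ) // PT (V ∪ Finset.Icc t u) (K+1) P},
      NS V (K+1)
        (insert (pick (P.1.filter (fun C => ∀ x ∈ C, x < t)))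
          (((E' (pick (P.1.filter (fun C => ∀ x ∈ C, x < t)))).symm ⟨_, hP'all P⟩).1.image
            (expa (pick (P.1.filter (fun C => ∀ x ∈ C, x < t))) t))) := fun P =>
    NS_expa hV (hBV P) (hB2 P) ((E' _).symm ⟨_, hP'all P⟩).2
  -- congruence helpers
  have F_eq : ∀ (A₁ A₂ : Finset ℕ), A₁ = A₂ →
      ∀ (X₁ : {S : Finset (Finset ℕ) // NS (insert t (V \ A₁)) K S})
        (X₂ : {S : Finset (Finset ℕ) // NS (insert t (V \ A₂)) K S}), X₁.1 = X₂.1 →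
        (E' A₁ X₁).1 = (E' A₂ X₂).1 := by
    rintro A₁ A₂ rfl X₁ X₂ h
    rw [Subtype.ext h]
  have G_eq : ∀ (A₁ A₂ : Finset ℕ), A₁ = A₂ →
      ∀ (X₁ : {P : Finset (Finset ℕ) //
          PT (insert t (V \ A₁) ∪ Finset.Icc (t+1) u) K P})
        (X₂ : {P : Finset (Finset ℕ) //
          PT (insert t (V \ A₂) ∪ Finset.Icc (t+1) u) K P}), X₁.1 = X₂.1 →
        ((E' A₁).symm X₁).1 = ((E' A₂).symm X₂).1 := by
    rintro A₁ A₂ rfl X₁ X₂ h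
    rw [Subtype.ext h]
  refine ⟨⟨fun S => ⟨insert (pick (mins S.1)) (E' (pick (mins S.1)) ⟨_, hS'all S⟩).1, hFPT S⟩,
    fun P => ⟨insert (pick (P.1.filter (fun C => ∀ x ∈ C, x < t)))
      (((E' (pick (P.1.filter (fun C => ∀ x ∈ C, x < t)))).symm ⟨_, hP'all P⟩).1.image
        (expa (pick (P.1.filter (fun C => ∀ x ∈ C, x < t))) t)), hGNS P⟩, ?_, ?_⟩, ?_⟩
  · -- left inverse
    intro S
    apply Subtype.ext
    dsimp only
    -- step 1 : the chosen block of (F S) is pick (mins S.1)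
    have hBB : pick ((insert (pick (mins S.1))
        (E' (pick (mins S.1)) ⟨_, hS'all S⟩).1).filter (fun C => ∀ x ∈ C, x < t)) =
        pick (mins S.1) := by
      apply pick_eq
      · rw [Finset.mem_filter]
        exact ⟨Finset.mem_insert_self _ _, fun x hx => hV x (hAV S hx)⟩
      · intro C hC hne
        rw [Finset.mem_filter] at hC
        obtain ⟨hC1, hC2⟩ := hC
        rcases Finset.mem_insert.1 hC1 with rfl | hC3
        · exact absurd rfl hne
        · have h4 := (hINV' (pick (mins S.1)) ⟨_, hS'all S⟩ C).1
            ⟨hC3, fun x hx => Nat.lt_succ_of_lt (hC2 x hx)⟩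
          have htC : t ∉ C := fun h => lt_irrefl t (hC2 t h)
          have h5 := (hminchar S C).2 (Or.inr ⟨h4.1, htC, h4.2⟩)
          exact hAlt S C h5.1 h5.2 hne
    have hmain : (((E' (pick ((insert (pick (mins S.1))
          (E' (pick (mins S.1)) ⟨_, hS'all S⟩).1).filter (fun C => ∀ x ∈ C, x < t)))).symm
          ⟨_, hP'all ⟨_, hFPT S⟩⟩).1.image
          (expa (pick ((insert (pick (mins S.1))
            (E' (pick (mins S.1)) ⟨_, hS'all S⟩).1).filter (fun C => ∀ x ∈ C, x < t))) t)) =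
        S.1.erase (pick (mins S.1)) := by
      have hback := G_eq _ _ hBB ⟨_, hP'all ⟨_, hFPT S⟩⟩
        ⟨(E' (pick (mins S.1)) ⟨_, hS'all S⟩).1, (E' (pick (mins S.1)) ⟨_, hS'all S⟩).2⟩
        (by
          show (insert (pick (mins S.1)) (E' (pick (mins S.1)) ⟨_, hS'all S⟩).1).erase _ = _
          rw [hBB]
          exact Finset.erase_insert (hAnotQ S))
      rw [hback, hBB]
      have heq : (⟨(E' (pick (mins S.1)) ⟨_, hS'all S⟩).1,
          (E' (pick (mins S.1)) ⟨_, hS'all S⟩).2⟩ :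
          {P : Finset (Finset ℕ) //
            PT (insert t (V \ pick (mins S.1)) ∪ Finset.Icc (t+1) u) K P}) =
          E' (pick (mins S.1)) ⟨_, hS'all S⟩ := Subtype.ext rfl
      rw [heq, Equiv.symm_apply_apply]
      exact roundtrip_S hV S.2 (hAmem S) (hAmin S)
    rw [hmain, hBB, Finset.insert_erase (hAmem S)]
  · -- right inverse
    intro P
    apply Subtype.ext
    dsimp only
    set B := pick (P.1.filter (fun C => ∀ x ∈ C, x < t)) with hBdef
    set S'' := (E' B).symm ⟨_, hP'all P⟩ with hS''def
    -- the G-value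
    have hGv : (⟨insert B (S''.1.image (expa B t)), hGNS P⟩ :
        {S : Finset (Finset ℕ) // NS V (K+1) S}).1 = insert B (S''.1.image (expa B t)) := rfl
    have hAA : pick (mins (insert B (S''.1.image (expa B t)))) = B := by
      apply pick_eq
      · rw [mem_mins]
        exact (mins_expa hV (hBV P) (hB2 P) S''.2 B).2 (Or.inl rfl)
      · intro C hC hne
        rw [mem_mins] at hC
        rcases (mins_expa hV (hBV P) (hB2 P) S''.2 C).1 hC with rfl | ⟨hC1, htC, hC3⟩
        · exact absurd rfl hne
        · have h6 := (hINV' B S'' C).2 ⟨hC1, hC3⟩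
          have h7 : (E' B S'').1 = P.1.erase B := by
            rw [hS''def, Equiv.apply_symm_apply]
          rw [h7] at h6
          have hCP : C ∈ P.1 := Finset.mem_of_mem_erase h6.1
          have hallt : ∀ x ∈ C, x < t := by
            intro x hx
            rcases Finset.mem_insert.1 ((S''.2.2.2.1 C hC1).1 hx) with rfl | h
            · exact absurd hx htC
            · exact hV x (Finset.mem_sdiff.1 h).1
          exact (hBspec P).2.2 C hCP hallt hne
    have hforw : (E' (pick (mins (insert B (S''.1.image (expa B t)))))
        ⟨_, hS'all ⟨_, hGNS P⟩⟩).1 = P.1.erase B := by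
      have h8 := F_eq _ _ hAA ⟨_, hS'all ⟨_, hGNS P⟩⟩ S''
        (by
          show ((insert B (S''.1.image (expa B t))).erase
            (pick (mins (insert B (S''.1.image (expa B t)))))).image _ = S''.1
          rw [hAA, Finset.erase_insert (A_not_mem_expa hV (hBV P) S''.2)]
          exact con_expa_image hV (hBV P) (Finset.card_pos.1 (by have h9 := hB2 P; rw [← hBdef] at h9; omega)) S''.2)
      rw [h8, hS''def, Equiv.apply_symm_apply]
    rw [hforw, hAA, Finset.insert_erase (hBspec P).1]
  · -- invariant
    intro S C
    dsimp only [Equiv.coe_fn_mk]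
    constructor
    · rintro ⟨hC, hlt⟩
      rcases Finset.mem_insert.1 hC with rfl | hC2
      · exact (hminchar S _).2 (Or.inl rfl)
      · have h4 := (hINV' (pick (mins S.1)) ⟨_, hS'all S⟩ C).1
          ⟨hC2, fun x hx => Nat.lt_succ_of_lt (hlt x hx)⟩
        exact (hminchar S C).2
          (Or.inr ⟨h4.1, fun h => lt_irrefl t (hlt t h), h4.2⟩)
    · intro h
      rcases (hminchar S C).1 h with heq | ⟨h1, h2, h3⟩
      · subst heq
        exact ⟨Finset.mem_insert_self _ _, fun x hx => hV x (hAV S hx)⟩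
      · have hlt' : ∀ x ∈ C, x < t := by
          intro x hx
          rcases Finset.mem_insert.1 (((hS'all S).2.2.1 C h1).1 hx) with rfl | hxx
          · exact absurd hx h2
          · exact hV x (Finset.mem_sdiff.1 hxx).1
        have h5 := (hINV' (pick (mins S.1)) ⟨_, hS'all S⟩ C).2 ⟨h1, h3⟩
        exact ⟨Finset.mem_insert_of_mem h5.1, hlt'⟩

end

theorem good : ∀ K : ℕ, 1 ≤ K → ∀ (V : Finset ℕ) (t u : ℕ), 1 ≤ t → u + 2 = t + K →
    (∀ x ∈ V, x < t) →
    ∃ E : {S : Finset (Finset ℕ) // NS V K S} ≃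
      {P : Finset (Finset ℕ) // PT (V ∪ Finset.Icc t u) K P},
      ∀ S C, (C ∈ (E S).1 ∧ ∀ x ∈ C, x < t) ↔
        (C ∈ S.1 ∧ ∀ B ∈ S.1, B ⊆ C → B = C) := by
  intro K
  induction K with
  | zero => omega
  | succ K ih =>
    intro _ V t u ht hu hV
    rcases Nat.eq_zero_or_pos K with rfl | hK
    · -- base case : one-element nested sets
      have hIcc : Finset.Icc t u = ∅ := Finset.Icc_eq_empty (by omega)
      rw [hIcc, Finset.union_empty]
      have hNS1 : ∀ S : {S : Finset (Finset ℕ) // NS V 1 S}, S.1 = {V} := by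
        intro S
        obtain ⟨a, ha⟩ := Finset.card_eq_one.1 S.2.1
        have hm := S.2.2.1
        rw [ha, Finset.mem_singleton] at hm
        rw [ha, hm]
      have hPT1 : ∀ P : {P : Finset (Finset ℕ) // PT V 1 P}, P.1 = {V} := by
        intro P
        obtain ⟨a, ha⟩ := Finset.card_eq_one.1 P.2.1
        have hb := P.2.2.2.2
        rw [ha, Finset.singleton_biUnion, id] at hb
        rw [ha, hb]
      have hV2 : ∀ S : {S : Finset (Finset ℕ) // NS V 1 S}, 2 ≤ V.card :=
        fun S => (S.2.2.2.1 V S.2.2.1).2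
      have hV2' : ∀ P : {P : Finset (Finset ℕ) // PT V 1 P}, 2 ≤ V.card := by
        intro P
        apply P.2.2.1 V
        rw [hPT1 P]
        exact Finset.mem_singleton_self V
      refine ⟨⟨fun S => ⟨{V}, Finset.card_singleton V, fun A hA => ?_,
          fun A hA B hB hne => ?_, by rw [Finset.singleton_biUnion, id]⟩,
        fun P => ⟨{V}, Finset.card_singleton V, Finset.mem_singleton_self V,
          fun A hA => ?_, fun A hA B hB => ?_⟩,
        fun S => Subtype.ext (hNS1 S).symm, fun P => Subtype.ext (hPT1 P).symm⟩, ?_⟩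
      · rw [Finset.mem_singleton.1 hA]
        exact hV2 S
      · exact absurd (by rw [Finset.mem_singleton.1 hA, Finset.mem_singleton.1 hB]) hne
      · rw [Finset.mem_singleton.1 hA]
        exact ⟨Finset.Subset.rfl, hV2' P⟩
      · rw [Finset.mem_singleton.1 hA, Finset.mem_singleton.1 hB]
        exact Or.inl Finset.Subset.rfl
      · intro S C
        dsimp only [Equiv.coe_fn_mk]
        rw [hNS1 S]
        simp only [Finset.mem_singleton]
        constructor
        · rintro ⟨rfl, _⟩
          exact ⟨rfl, fun B hB _ => hB⟩
        · rintro ⟨rfl, _⟩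
          exact ⟨rfl, fun x hx => hV x hx⟩
    · -- inductive step
      have hVA : ∀ A : Finset ℕ, ∀ x ∈ insert t (V \ A), x < t + 1 := by
        intro A x hx
        rcases Finset.mem_insert.1 hx with rfl | h
        · omega
        · exact Nat.lt_succ_of_lt (hV x (Finset.mem_sdiff.1 h).1)
      choose E' hINV' using fun A : Finset ℕ =>
        ih hK (insert t (V \ A)) (t+1) u (by omega) (by omega) (hVA A)
      exact good_step hK ht hu hV E' hINV'

theorem stmt0' (n k : ℕ) (hn : 2 ≤ n) (hk1 : 1 ≤ k) (hk : k ≤ n - 1) :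
    Nonempty ({S : Finset (Finset ℕ) // NS (Finset.Icc 1 n) k S} ≃
      {P : Finset (Finset ℕ) // PT (Finset.Icc 1 (n + k - 1)) k P}) := by
  obtain ⟨E, _⟩ := good k hk1 (Finset.Icc 1 n) (n+1) (n+k-1) (by omega) (by omega)
    (fun x hx => by have := (Finset.mem_Icc.1 hx).2; omega)
  have hg : Finset.Icc 1 n ∪ Finset.Icc (n+1) (n+k-1) = Finset.Icc 1 (n+k-1) := by
    ext x
    simp only [Finset.mem_union, Finset.mem_Icc]
    omega
  rw [hg] at E
  exact ⟨E⟩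

theorem stmt0 (n k : ℕ) (hn : 2 ≤ n) (hk1 : 1 ≤ k) (hk : k ≤ n - 1) :
    Nonempty ({S : Finset (Finset ℕ) // IsNested2 n k S} ≃
      {P : Finset (Finset ℕ) // IsPart2 (n + k - 1) k P}) := by
  exact stmt0' n k hn hk1 hk
end

section
/- For integers n ≥ 2 and 1 ≤ k ≤ n-1, the number of distinguished internally ordered k-partitions of {1,...,n+k-1} equals n! · C(n-2, k-1) · C(n+k-1, k-1). -/
/-- An admissible internally ordered `k`-partition of `{1,...,m}`: a family of `k`
pairwise disjoint duplicate-free lists (each list records the linear order of a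
block), each of length ≥ 2, whose entries exhaust `{1,...,m}`. -/
def IsIOPart (m k : ℕ) (P : Finset (List ℕ)) : Prop :=
  P.card = k ∧ (∀ l ∈ P, l.Nodup ∧ 2 ≤ l.length) ∧
  (∀ l ∈ P, ∀ l' ∈ P, l ≠ l' → ∀ x ∈ l, x ∉ l') ∧
  (∀ x, x ∈ Finset.Icc 1 m ↔ ∃ l ∈ P, x ∈ l)

namespace IOPartAux

open List Finset

variable {α : Type*} [DecidableEq α]

/-! ### Splitting a list according to a list of lengths -/

def splitBy : List ℕ → List α → List (List α)
  | [], _ => []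
  | a :: c, J => J.take a :: splitBy c (J.drop a)

lemma flatten_splitBy : ∀ (c : List ℕ) (J : List α), c.sum = J.length →
    (splitBy c J).flatten = J
  | [], J, h => by
    have : J = [] := by
      cases J with
      | nil => rfl
      | cons a t => simp at h
    simp [splitBy, this]
  | a :: c, J, h => by
    simp only [splitBy, List.flatten_cons]
    rw [flatten_splitBy c (J.drop a) (by simp only [List.sum_cons] at h; simp; omega),
      List.take_append_drop]

lemma map_length_splitBy : ∀ (c : List ℕ) (J : List α), c.sum = J.length →
    (splitBy c J).map List.length = c
  | [], _, _ => rfl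
  | a :: c, J, h => by
    simp only [splitBy, List.map_cons]
    rw [map_length_splitBy c (J.drop a) (by simp only [List.sum_cons] at h; simp; omega),
      List.length_take]
    simp only [List.sum_cons] at h
    congr 1
    omega

lemma splitBy_map_length_flatten : ∀ L : List (List α),
    splitBy (L.map List.length) L.flatten = L
  | [] => rfl
  | l :: L => by
    simp only [List.map_cons, List.flatten_cons, splitBy]
    rw [List.take_left, List.drop_left, splitBy_map_length_flatten L]

lemma sublist_of_mem_splitBy : ∀ (c : List ℕ) (J : List α) (l : List α),
    l ∈ splitBy c J → l.Sublist J
  | [], _, _, h => by simp [splitBy] at h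
  | a :: c, J, l, h => by
    simp only [splitBy, List.mem_cons] at h
    rcases h with rfl | h
    · exact List.take_sublist _ _
    · exact (sublist_of_mem_splitBy c _ _ h).trans (List.drop_sublist _ _)

/-! ### Counting orderings of a finset -/

noncomputable def permsEquiv (l₀ : List α) (h : l₀.Nodup) :
    {t : List α // t ~ l₀} ≃ Fin (l₀.length.factorial) := by
  have e1 : {t : List α // t ~ l₀} ≃ {t : List α // t ∈ l₀.permutations.toFinset} :=
    Equiv.subtypeEquivRight (by simp [List.mem_permutations])
  refine e1.trans (Fintype.equivFinOfCardEq ?_)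
  rw [Fintype.card_coe, List.toFinset_card_of_nodup (List.nodup_permutations _ h),
    List.length_permutations]

noncomputable def orderingsEquiv (S : Finset α) :
    {t : List α // t.Nodup ∧ t.toFinset = S} ≃ Fin (S.card.factorial) := by
  have e1 : {t : List α // t.Nodup ∧ t.toFinset = S} ≃ {t : List α // t ~ S.toList} := by
    refine Equiv.subtypeEquivRight fun t => ?_
    constructor
    · rintro ⟨h1, h2⟩
      rw [List.perm_ext_iff_of_nodup h1 S.nodup_toList]
      intro x
      rw [← List.mem_toFinset, h2, Finset.mem_toList]
    · intro hp
      refine ⟨hp.symm.nodup S.nodup_toList, ?_⟩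
      ext x
      rw [List.mem_toFinset, hp.mem_iff, Finset.mem_toList]
  exact e1.trans ((permsEquiv _ S.nodup_toList).trans (finCongr (by rw [Finset.length_toList])))

/-! ### The three auxiliary types -/

def JP (m : ℕ) (J : List ℕ) : Prop := J.Nodup ∧ ∀ x, x ∈ J ↔ x ∈ Finset.Icc 1 m

def CP (m k : ℕ) (c : List ℕ) : Prop := c.length = k ∧ (∀ a ∈ c, 2 ≤ a) ∧ c.sum = m

def BP (m k : ℕ) (L : List (List ℕ)) : Prop :=
  L.length = k ∧ (∀ l ∈ L, l.Nodup ∧ 2 ≤ l.length) ∧ L.flatten.Nodup ∧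
    ∀ x, x ∈ L.flatten ↔ x ∈ Finset.Icc 1 m

lemma length_of_JP {m : ℕ} {J : List ℕ} (h : JP m J) : J.length = m := by
  rw [← List.toFinset_card_of_nodup h.1]
  have : J.toFinset = Finset.Icc 1 m := by ext x; simp [h.2 x]
  rw [this, Nat.card_Icc]
  omega

/-! ### `B ≃ J × C` -/

noncomputable def BJCequiv (m k : ℕ) :
    {L : List (List ℕ) // BP m k L} ≃ {J : List ℕ // JP m J} × {c : List ℕ // CP m k c} where
  toFun := fun L =>
    (⟨L.1.flatten, L.2.2.2.1, L.2.2.2.2⟩,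
     ⟨L.1.map List.length, by simp [L.2.1], by
        intro a ha
        simp only [List.mem_map] at ha
        obtain ⟨l, hl, rfl⟩ := ha
        exact (L.2.2.1 l hl).2, by
        rw [← List.length_flatten]
        exact length_of_JP ⟨L.2.2.2.1, L.2.2.2.2⟩⟩)
  invFun := fun x =>
    ⟨splitBy x.2.1 x.1.1, by
      obtain ⟨⟨J, hJ⟩, ⟨c, hc1, hc2, hc3⟩⟩ := x
      have hsum : c.sum = J.length := by rw [hc3, length_of_JP hJ]
      refine ⟨?_, ?_, ?_, ?_⟩
      · have h1 := congrArg List.length (map_length_splitBy c J hsum)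
        simpa using h1.trans hc1
      · intro l hl
        refine ⟨(sublist_of_mem_splitBy c J l hl).nodup hJ.1, ?_⟩
        have : l.length ∈ (splitBy c J).map List.length := List.mem_map_of_mem hl
        rw [map_length_splitBy c J hsum] at this
        exact hc2 _ this
      · rw [flatten_splitBy c J hsum]; exact hJ.1
      · rw [flatten_splitBy c J hsum]; exact hJ.2⟩
  left_inv := fun L => Subtype.ext (splitBy_map_length_flatten L.1)
  right_inv := fun x => by
    obtain ⟨⟨J, hJ⟩, ⟨c, hc1, hc2, hc3⟩⟩ := x
    have hsum : c.sum = J.length := by rw [hc3, length_of_JP hJ]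
    refine Prod.ext (Subtype.ext ?_) (Subtype.ext ?_)
    · exact flatten_splitBy c J hsum
    · exact map_length_splitBy c J hsum

/-! ### Counting `J` -/

noncomputable def JPequiv (m : ℕ) : {J : List ℕ // JP m J} ≃ Fin (Nat.factorial m) := by
  have e1 : {J : List ℕ // JP m J} ≃
      {t : List ℕ // t.Nodup ∧ t.toFinset = Finset.Icc 1 m} :=
    Equiv.subtypeEquivRight (fun J => by
      constructor
      · rintro ⟨h1, h2⟩
        exact ⟨h1, by ext x; simp [h2 x]⟩
      · rintro ⟨h1, h2⟩
        exact ⟨h1, fun x => by rw [← h2]; simp⟩)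
  refine e1.trans ((orderingsEquiv _).trans (finCongr ?_))
  rw [Nat.card_Icc]
  simp

/-! ### Counting `C` -/

lemma sum_map_add_two (d : List ℕ) : (d.map (· + 2)).sum = d.sum + 2 * d.length := by
  induction d with
  | nil => simp
  | cons a d ih => simp [ih]; omega

lemma two_mul_length_le_sum {c : List ℕ} (h : ∀ a ∈ c, 2 ≤ a) : 2 * c.length ≤ c.sum := by
  induction c with
  | nil => simp
  | cons a c ih =>
    simp only [List.length_cons, List.sum_cons]
    have h1 := h a (by simp)
    have h2 := ih (fun b hb => h b (List.mem_cons_of_mem _ hb))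
    omega

lemma sum_map_sub_two {c : List ℕ} (h : ∀ a ∈ c, 2 ≤ a) :
    (c.map (· - 2)).sum = c.sum - 2 * c.length := by
  induction c with
  | nil => simp
  | cons a c ih =>
    simp only [List.map_cons, List.sum_cons, List.length_cons]
    have h1 := h a (by simp)
    have h2 := ih (fun b hb => h b (List.mem_cons_of_mem _ hb))
    have h3 := two_mul_length_le_sum (fun b hb => h b (List.mem_cons_of_mem _ hb))
    omega

noncomputable def CDequiv (m k : ℕ) (hm : 2 * k ≤ m) :
    {c : List ℕ // CP m k c} ≃ {d : List ℕ // d.length = k ∧ d.sum = m - 2 * k} where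
  toFun := fun c =>
    ⟨c.1.map (· - 2), by simp [c.2.1], by
      rw [sum_map_sub_two c.2.2.1, c.2.2.2, c.2.1]⟩
  invFun := fun d =>
    ⟨d.1.map (· + 2), by simp [d.2.1], by
      intro a ha
      simp only [List.mem_map] at ha
      obtain ⟨b, _, rfl⟩ := ha
      omega, by
      rw [sum_map_add_two, d.2.1, d.2.2]
      omega⟩
  left_inv := fun c => Subtype.ext (by
    show List.map _ (List.map _ _) = _
    rw [List.map_map]
    refine (List.map_congr_left ?_).trans (List.map_id _)
    intro a ha
    have := c.2.2.1 a ha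
    simp only [Function.comp_apply, id_eq]
    omega)
  right_inv := fun d => Subtype.ext (by
    show List.map _ (List.map _ _) = _
    rw [List.map_map]
    refine (List.map_congr_left ?_).trans (List.map_id _)
    intro a _
    simp only [Function.comp_apply, id_eq]
    omega)

noncomputable def DFequiv (k s : ℕ) :
    {d : List ℕ // d.length = k ∧ d.sum = s} ≃ {f : Fin k → ℕ // ∑ i, f i = s} where
  toFun := fun d =>
    ⟨fun i => d.1[(i : ℕ)]'(by rw [d.2.1]; exact i.2), by
      have h := Fin.sum_ofFn (fun i : Fin d.1.length => d.1[(i : ℕ)])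
      rw [List.ofFn_getElem] at h
      exact ((Fintype.sum_equiv (finCongr d.2.1.symm) _
        (fun i : Fin d.1.length => d.1[(i : ℕ)]) (fun i => rfl)).trans h.symm).trans d.2.2⟩
  invFun := fun f => ⟨List.ofFn f.1, by simp, by rw [Fin.sum_ofFn]; exact f.2⟩
  left_inv := fun d => Subtype.ext (by
    apply List.ext_getElem
    · simp [d.2.1]
    · intro i h1 h2
      simp)
  right_inv := fun f => Subtype.ext (by
    funext i
    simp)

lemma sum_count_univ {k : ℕ} (s : Multiset (Fin k)) :
    ∑ i : Fin k, s.count i = Multiset.card s := by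
  rw [← Multiset.toFinset_sum_count_eq s]
  refine (Finset.sum_subset (Finset.subset_univ _) ?_).symm
  intro x _ hx
  rwa [Multiset.count_eq_zero, ← Multiset.mem_toFinset]

lemma sum_count_nsmul_univ {k : ℕ} (s : Multiset (Fin k)) :
    ∑ i : Fin k, s.count i • ({i} : Multiset (Fin k)) = s := by
  refine ((Finset.sum_subset (Finset.subset_univ s.toFinset) ?_).symm).trans
    (Multiset.toFinset_sum_count_nsmul_eq s)
  intro x _ hx
  rw [Multiset.count_eq_zero.2 (by rwa [← Multiset.mem_toFinset]), zero_smul]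

noncomputable def tupleSymEquiv (k s : ℕ) :
    {f : Fin k → ℕ // ∑ i, f i = s} ≃ Sym (Fin k) s where
  toFun := fun f =>
    ⟨∑ i, (f.1 i) • ({i} : Multiset (Fin k)), by
      change Multiset.cardHom _ = s
      rw [map_sum Multiset.cardHom (fun i => (f.1 i) • ({i} : Multiset (Fin k))) Finset.univ]
      simp only [Multiset.cardHom_apply, Multiset.card_nsmul, Multiset.card_singleton, mul_one]
      exact f.2⟩
  invFun := fun m =>
    ⟨fun i => m.1.count i, by rw [sum_count_univ, m.2]⟩
  left_inv := fun f => Subtype.ext (by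
    funext j
    show Multiset.count j (∑ i, (f.1 i) • ({i} : Multiset (Fin k))) = f.1 j
    rw [Multiset.count_sum']
    simp only [Multiset.count_nsmul, Multiset.count_singleton]
    rw [Finset.sum_eq_single j]
    · simp
    · intro b _ hb
      simp [Ne.symm hb]
    · simp)
  right_inv := fun m => Subtype.ext (by
    simp only
    exact sum_count_nsmul_univ m.1)

lemma card_CP (m k : ℕ) (hk : 1 ≤ k) (hm : 2 * k ≤ m) :
    Nat.card {c : List ℕ // CP m k c} = (m - k - 1).choose (k - 1) := by
  rw [Nat.card_congr (((CDequiv m k hm).trans (DFequiv k (m - 2 * k))).trans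
    (tupleSymEquiv k (m - 2 * k)))]
  rw [Nat.card_eq_fintype_card, Sym.card_sym_eq_choose]
  rw [Fintype.card_fin]
  have h1 : k + (m - 2 * k) - 1 = m - k - 1 := by omega
  have h2 : (m - k - 1) - (m - 2 * k) = k - 1 := by omega
  rw [h1, ← h2, Nat.choose_symm (by omega)]

/-! ### `B ≃ Σ a : A, orderings of the unmarked parts` -/

def At (m k : ℕ) := {p : Finset (List ℕ) × List ℕ // IsIOPart m k p.1 ∧ p.2 ∈ p.1}

lemma BP.list_nodup {m k : ℕ} {L : List (List ℕ)} (h : BP m k L) : L.Nodup := by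
  have hd := (List.nodup_flatten.1 h.2.2.1).2
  refine hd.imp_of_mem ?_
  intro a b ha _ hab
  intro h'
  subst h'
  have h2 := (h.2.1 a ha).2
  obtain ⟨x, hx⟩ := List.exists_mem_of_ne_nil a (by
    intro h'
    rw [h'] at h2
    simp at h2)
  exact hab hx hx

noncomputable def BAequiv (m k : ℕ) (hk : 1 ≤ k) :
    {L : List (List ℕ) // BP m k L} ≃
      Σ a : At m k, {t : List (List ℕ) // t.Nodup ∧ t.toFinset = a.1.1.erase a.1.2} := by
  refine (Equiv.ofBijective
    (fun x : (Σ a : At m k,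
        {t : List (List ℕ) // t.Nodup ∧ t.toFinset = a.1.1.erase a.1.2}) =>
      (⟨x.1.1.2 :: x.2.1, ?_⟩ : {L : List (List ℕ) // BP m k L}))
    ⟨?_, ?_⟩).symm
  · obtain ⟨⟨⟨P, l⟩, ⟨⟨hc, hparts, hdisj, hcov⟩, hl⟩⟩, ⟨t, ht1, ht2⟩⟩ := x
    simp only at ht2 ⊢
    have hmem : ∀ l' ∈ l :: t, l' ∈ P := by
      intro l' hl'
      rcases List.mem_cons.1 hl' with rfl | h
      · exact hl
      · have := List.mem_toFinset.2 h
        rw [ht2] at this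
        exact Finset.mem_of_mem_erase this
    have hnd : (l :: t).Nodup := by
      rw [List.nodup_cons]
      refine ⟨?_, ht1⟩
      intro h
      have := List.mem_toFinset.2 h
      rw [ht2] at this
      exact (Finset.notMem_erase l P) this
    refine ⟨?_, ?_, ?_, ?_⟩
    · have : t.length = k - 1 := by
        rw [← List.toFinset_card_of_nodup ht1, ht2, Finset.card_erase_of_mem hl, hc]
      simp only [List.length_cons, this]
      omega
    · intro l' hl'
      exact hparts l' (hmem l' hl')
    · rw [List.nodup_flatten]
      refine ⟨fun l' hl' => (hparts l' (hmem l' hl')).1, ?_⟩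
      exact hnd.pairwise_of_forall_ne (fun a ha b hb hab =>
        hdisj a (hmem a ha) b (hmem b hb) hab)
    · intro x
      rw [List.mem_flatten, hcov x]
      constructor
      · rintro ⟨l', hl', hx⟩
        exact ⟨l', hmem l' hl', hx⟩
      · rintro ⟨l', hl', hx⟩
        by_cases h : l' = l
        · exact ⟨l, List.mem_cons_self, h ▸ hx⟩
        · refine ⟨l', List.mem_cons_of_mem _ ?_, hx⟩
          rw [← List.mem_toFinset, ht2]
          exact Finset.mem_erase.2 ⟨h, hl'⟩
  · rintro ⟨⟨⟨P1, l1⟩, ⟨hP1, hl1⟩⟩, ⟨t1, ht11, ht12⟩⟩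
      ⟨⟨⟨P2, l2⟩, ⟨hP2, hl2⟩⟩, ⟨t2, ht21, ht22⟩⟩ h
    simp only [Subtype.mk.injEq, List.cons.injEq] at h
    obtain ⟨rfl, rfl⟩ := h
    simp only at ht12 ht22 hl1 hl2
    have hP : P1 = P2 := by
      rw [← Finset.insert_erase hl1, ← Finset.insert_erase hl2, ← ht12, ← ht22]
    subst hP
    rfl
  · rintro ⟨L, hL⟩
    have hne : L ≠ [] := by
      intro h
      rw [h] at hL
      have := hL.1
      simp at this
      omega
    have hnd : L.Nodup := hL.list_nodup
    have hLcons : L.head hne :: L.tail = L := List.cons_head_tail hne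
    have hnd2 : (L.head hne :: L.tail).Nodup := by rwa [hLcons]
    have hdisj : ∀ l ∈ L.toFinset, ∀ l' ∈ L.toFinset, l ≠ l' → ∀ x ∈ l, x ∉ l' := by
      have hp := (List.nodup_flatten.1 hL.2.2.1).2
      intro l hl l' hl' hne' x hx
      haveI : Std.Symm (@List.Disjoint ℕ) := ⟨fun a b hab => hab.symm⟩
      exact hp.forall (List.mem_toFinset.1 hl)
        (List.mem_toFinset.1 hl') hne' hx
    refine ⟨⟨⟨(L.toFinset, L.head hne), ⟨?_, ?_, hdisj, ?_⟩, ?_⟩, ⟨L.tail, ?_, ?_⟩⟩, ?_⟩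
    · rw [List.toFinset_card_of_nodup hnd, hL.1]
    · intro l hl
      exact hL.2.1 l (List.mem_toFinset.1 hl)
    · intro x
      rw [← hL.2.2.2 x, List.mem_flatten]
      simp
    · exact List.mem_toFinset.2 (L.head_mem hne)
    · exact (List.nodup_cons.1 hnd2).2
    · have hnotmem : L.head hne ∉ L.tail.toFinset := by
        rw [List.mem_toFinset]
        exact (List.nodup_cons.1 hnd2).1
      have hins : L.toFinset = insert (L.head hne) L.tail.toFinset := by
        conv_lhs => rw [← hLcons]
        rw [List.toFinset_cons]
      simp only
      rw [hins, Finset.erase_insert hnotmem]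
    · exact Subtype.ext hLcons

/-! ### Putting it together -/

lemma card_A (m k : ℕ) (hk : 1 ≤ k) (hm : 2 * k ≤ m) :
    Nat.card (At m k) * (k - 1).factorial =
      m.factorial * (m - k - 1).choose (k - 1) := by
  have hB1 : Nat.card {L : List (List ℕ) // BP m k L} =
      Nat.card (At m k) * (k - 1).factorial := by
    rw [Nat.card_congr (BAequiv m k hk)]
    have e : (Σ a : At m k,
        {t : List (List ℕ) // t.Nodup ∧ t.toFinset = a.1.1.erase a.1.2}) ≃
        At m k × Fin ((k - 1).factorial) := by
      refine (Equiv.sigmaCongrRight (fun a => ?_)).trans (Equiv.sigmaEquivProd _ _)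
      refine (orderingsEquiv _).trans (finCongr ?_)
      rw [Finset.card_erase_of_mem a.2.2, a.2.1.1]
    rw [Nat.card_congr e, Nat.card_prod,
      Nat.card_eq_of_equiv_fin (Equiv.refl (Fin ((k - 1).factorial)))]
  have hB2 : Nat.card {L : List (List ℕ) // BP m k L} =
      m.factorial * (m - k - 1).choose (k - 1) := by
    rw [Nat.card_congr (BJCequiv m k), Nat.card_prod,
      Nat.card_eq_of_equiv_fin (JPequiv m), card_CP m k hk hm]
  rw [← hB1, hB2]

end IOPartAux

/-- A distinguished internally ordered `k`-partition is an admissible internally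
ordered `k`-partition together with a marked part; its count is
`n! · C(n-2,k-1) · C(n+k-1,k-1)`. -/
theorem stmt2 (n k : ℕ) (hn : 2 ≤ n) (hk1 : 1 ≤ k) (hk : k ≤ n - 1) :
    Nat.card {p : Finset (List ℕ) × List ℕ //
        IsIOPart (n + k - 1) k p.1 ∧ p.2 ∈ p.1} =
      n.factorial * (n - 2).choose (k - 1) * (n + k - 1).choose (k - 1) := by
  set m := n + k - 1 with hm
  have hm2 : 2 * k ≤ m := by omega
  have h := IOPartAux.card_A m k hk1 hm2
  have hmk : m - k - 1 = n - 2 := by omega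
  rw [hmk] at h
  have key : (n.factorial * (n - 2).choose (k - 1) * m.choose (k - 1)) * (k - 1).factorial
      = m.factorial * (n - 2).choose (k - 1) := by
    have hle : k - 1 ≤ m := by omega
    have hmn : m - (k - 1) = n := by omega
    have := Nat.choose_mul_factorial_mul_factorial hle
    rw [hmn] at this
    calc (n.factorial * (n - 2).choose (k - 1) * m.choose (k - 1)) * (k - 1).factorial
        = (n - 2).choose (k - 1) * (m.choose (k - 1) * (k - 1).factorial * n.factorial) := by
          ring
      _ = (n - 2).choose (k - 1) * m.factorial := by rw [this]
      _ = m.factorial * (n - 2).choose (k - 1) := by ring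
  have : Nat.card (IOPartAux.At m k) * (k - 1).factorial =
      (n.factorial * (n - 2).choose (k - 1) * m.choose (k - 1)) * (k - 1).factorial := by
    rw [h, key]
  have hfin := Nat.factorial_pos (k - 1)
  exact Nat.eq_of_mul_eq_mul_right hfin this
end

section
/- For integers n ≥ 2 and 1 ≤ k ≤ n-1, the number of admissible internally ordered k-partitions of {1,...,n+k-1} equals (1/k) · n! · C(n-2, k-1) · C(n+k-1, k-1). -/
namespace IOPartAux

/-- Lists enumerating `{1,...,m}`. -/
abbrev PermL (m : ℕ) : Type :=
  {l : List ℕ // l.Nodup ∧ ∀ x, x ∈ l ↔ x ∈ Finset.Icc 1 m}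

/-- Lists of `k` block sizes, each `≥ 2`, summing to `m`. -/
abbrev CompL (m k : ℕ) : Type :=
  {b : List ℕ // b.length = k ∧ (∀ x ∈ b, 2 ≤ x) ∧ b.sum = m}

/-- Ordered sequences of `k` blocks. -/
abbrev OrdL (m k : ℕ) : Type :=
  {L : List (List ℕ) // L.length = k ∧ (∀ b ∈ L, 2 ≤ b.length) ∧ L.flatten.Nodup ∧
    ∀ x, x ∈ L.flatten ↔ x ∈ Finset.Icc 1 m}

lemma length_of_exhaust {m : ℕ} {l : List ℕ} (h1 : l.Nodup)
    (h2 : ∀ x, x ∈ l ↔ x ∈ Finset.Icc 1 m) : l.length = m := by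
  have ht : l.toFinset = Finset.Icc 1 m := Finset.ext fun x => by
    simpa using h2 x
  have := List.toFinset_card_of_nodup h1
  rw [ht] at this
  simpa [Nat.card_Icc] using this.symm

lemma flatten_length {m k : ℕ} (L : OrdL m k) : L.1.flatten.length = m :=
  length_of_exhaust L.2.2.2.1 L.2.2.2.2

/-- Splitting equivalence: ordered block sequences correspond to a permutation
together with a composition. -/
def ordEquivProd (m k : ℕ) : OrdL m k ≃ PermL m × CompL m k where
  toFun L := (⟨L.1.flatten, L.2.2.2.1, L.2.2.2.2⟩,
    ⟨L.1.map List.length, by simp [L.2.1], by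
      intro x hx
      simp only [List.mem_map] at hx
      obtain ⟨b, hb, rfl⟩ := hx
      exact L.2.2.1 b hb, by
      rw [← List.length_flatten]; exact flatten_length L⟩)
  invFun p := by
    refine ⟨p.1.1.splitWrtCompositionAux p.2.1, ?_, ?_, ?_, ?_⟩
    · rw [List.length_splitWrtCompositionAux]; exact p.2.2.1
    · intro b hb
      have hsum : p.2.1.sum = p.1.1.length := by
        rw [length_of_exhaust p.1.2.1 p.1.2.2]; exact p.2.2.2.2
      have hmap := List.map_length_splitWrtCompositionAux (l := p.1.1) (le_of_eq hsum)
      have : b.length ∈ p.2.1 := by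
        rw [← hmap]; exact List.mem_map_of_mem hb
      exact p.2.2.2.1 _ this
    · rw [List.flatten_splitWrtCompositionAux
        (by rw [length_of_exhaust p.1.2.1 p.1.2.2]; exact p.2.2.2.2)]
      exact p.1.2.1
    · rw [List.flatten_splitWrtCompositionAux
        (by rw [length_of_exhaust p.1.2.1 p.1.2.2]; exact p.2.2.2.2)]
      exact p.1.2.2
  left_inv L := by
    apply Subtype.ext
    rw [List.eq_iff_flatten_eq]
    have hsum : (L.1.map List.length).sum = L.1.flatten.length :=
      List.length_flatten.symm
    constructor
    · exact List.flatten_splitWrtCompositionAux hsum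
    · exact List.map_length_splitWrtCompositionAux (le_of_eq hsum)
  right_inv p := by
    have hsum : p.2.1.sum = p.1.1.length := by
      rw [length_of_exhaust p.1.2.1 p.1.2.2]; exact p.2.2.2.2
    ext : 1
    · apply Subtype.ext
      exact List.flatten_splitWrtCompositionAux hsum
    · apply Subtype.ext
      exact List.map_length_splitWrtCompositionAux (le_of_eq hsum)

/-- The permutations side has `m!` elements. -/
lemma card_PermL (m : ℕ) : Nat.card (PermL m) = m.factorial := by
  classical
  set L0 : List ℕ := (Finset.Icc 1 m).toList with hL0
  have hnd : L0.Nodup := Finset.nodup_toList _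
  have e1 : PermL m ≃ {l : List ℕ // l ∈ L0.permutations} := by
    apply Equiv.subtypeEquivRight
    intro l
    rw [List.mem_permutations]
    constructor
    · rintro ⟨h1, h2⟩
      refine List.perm_of_nodup_nodup_toFinset_eq h1 hnd ?_
      ext x
      simp only [List.mem_toFinset, Finset.mem_toList, h2, hL0]
    · intro h
      refine ⟨h.nodup_iff.2 hnd, fun x => ?_⟩
      rw [h.mem_iff, hL0, Finset.mem_toList]
  have hndp : L0.permutations.Nodup := List.nodup_permutations _ hnd
  have e2 := (List.Nodup.getEquiv L0.permutations hndp).symm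
  rw [Nat.card_congr (e1.trans e2)]
  simp [List.length_permutations, hL0,
    List.toFinset_card_of_nodup, Nat.card_Icc]

lemma get_mem' {α : Type*} (l : List α) (j : Fin l.length) : l.get j ∈ l := by
  simpa using List.get_mem l j.1 j.2

/-- The compositions side. -/
def compEquivTuple (k t : ℕ) :
    CompL (2 * k + t) k ≃ {c : Fin k → ℕ // ∑ i, c i = t} where
  toFun b := ⟨fun i => b.1.get (Fin.cast b.2.1.symm i) - 2, by
    show (∑ i : Fin k, (b.1.get (Fin.cast b.2.1.symm i) - 2)) = t
    have h2 : ∀ i : Fin k, 2 ≤ b.1.get (Fin.cast b.2.1.symm i) :=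
      fun i => b.2.2.1 _ (get_mem' _ _)
    have hA : b.1.sum = ∑ j : Fin b.1.length, b.1.get j := by
      conv_lhs => rw [← List.ofFn_get b.1]
      rw [List.sum_ofFn]
    have hB : ∑ i : Fin k, b.1.get (Fin.cast b.2.1.symm i)
        = ∑ j : Fin b.1.length, b.1.get j :=
      Fintype.sum_equiv (finCongr b.2.1.symm) _ _ (fun i => rfl)
    have hD : ∑ i : Fin k, (b.1.get (Fin.cast b.2.1.symm i) - 2 + 2)
        = ∑ i : Fin k, (b.1.get (Fin.cast b.2.1.symm i) - 2) + 2 * k := by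
      rw [Finset.sum_add_distrib]
      simp [mul_comm]
    have hE : ∑ i : Fin k, (b.1.get (Fin.cast b.2.1.symm i) - 2 + 2)
        = ∑ i : Fin k, b.1.get (Fin.cast b.2.1.symm i) :=
      Finset.sum_congr rfl (fun i _ => Nat.sub_add_cancel (h2 i))
    have hS := b.2.2.2
    omega⟩
  invFun c := ⟨List.ofFn (fun i => c.1 i + 2), by simp, by
    intro x hx
    rw [List.mem_ofFn] at hx
    obtain ⟨i, rfl⟩ := hx
    show 2 ≤ c.1 i + 2
    omega, by
    rw [List.sum_ofFn, Finset.sum_add_distrib, c.2]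
    simp only [Finset.sum_const, Finset.card_univ, Fintype.card_fin, smul_eq_mul]
    omega⟩
  left_inv b := by
    apply Subtype.ext
    apply List.ext_get
    · simp [b.2.1]
    · intro i h1 h2
      simp only [List.get_ofFn]
      have : 2 ≤ b.1.get ⟨i, h2⟩ := b.2.2.1 _ (get_mem' _ _)
      simp only [Fin.cast_mk]
      exact Nat.sub_add_cancel this
  right_inv c := by
    apply Subtype.ext
    funext i
    simp only [List.get_ofFn, Fin.cast_cast, Fin.cast_eq_self]
    omega

/-- Tuples summing to `t` correspond to multisets of size `t`. -/
noncomputable def tupleEquivSym (k t : ℕ) :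
    {c : Fin k → ℕ // ∑ i, c i = t} ≃ Sym (Fin k) t where
  toFun c := ⟨Finsupp.toMultiset (Finsupp.equivFunOnFinite.symm c.1), by
    rw [Finsupp.card_toMultiset, Finsupp.sum_fintype]
    · simpa using c.2
    · intro i; rfl⟩
  invFun s := ⟨fun i => Multiset.count i s.1, by
    have hc := s.2
    have : Finsupp.toMultiset (Multiset.toFinsupp s.1) = s.1 :=
      Multiset.toFinsupp_toMultiset s.1
    have hcard : Multiset.card (Finsupp.toMultiset (Multiset.toFinsupp s.1)) = t := by
      rw [this, hc]
    rw [Finsupp.card_toMultiset, Finsupp.sum_fintype] at hcard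
    · simpa [Multiset.toFinsupp_apply] using hcard
    · intro i; rfl⟩
  left_inv c := by
    apply Subtype.ext
    funext i
    show Multiset.count i (Finsupp.toMultiset (Finsupp.equivFunOnFinite.symm c.1)) = c.1 i
    rw [Finsupp.count_toMultiset]
    simp
  right_inv s := by
    apply Subtype.ext
    show Finsupp.toMultiset (Finsupp.equivFunOnFinite.symm
      (fun i => Multiset.count i s.1)) = s.1
    have : (Finsupp.equivFunOnFinite.symm (fun i => Multiset.count i s.1))
        = Multiset.toFinsupp s.1 := by
      ext i
      simp [Multiset.toFinsupp_apply]
    rw [this, Multiset.toFinsupp_toMultiset]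

lemma card_CompL (k t : ℕ) : Nat.card (CompL (2 * k + t) k) = (k + t - 1).choose t := by
  rw [Nat.card_congr ((compEquivTuple k t).trans (tupleEquivSym k t))]
  rw [Nat.card_eq_fintype_card, Sym.card_sym_eq_choose]
  simp

lemma ordl_nodup {m k : ℕ} (L : OrdL m k) : L.1.Nodup := by
  obtain ⟨hlen, hblk, hnd, hcov⟩ := L.2
  have hpair := (List.nodup_flatten.1 hnd).2
  refine hpair.imp_of_mem ?_
  intro a b ha hb hdis hab
  subst hab
  have h2 : 2 ≤ a.length := hblk a ha
  have hne : a ≠ [] := by intro h; simp [h] at h2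
  obtain ⟨x, hx⟩ := List.exists_mem_of_ne_nil a hne
  exact hdis hx hx

lemma isIOPart_toFinset {m k : ℕ} (L : OrdL m k) : IsIOPart m k L.1.toFinset := by
  obtain ⟨hlen, hblk, hnd, hcov⟩ := L.2
  have hndL := ordl_nodup L
  have hpair := (List.nodup_flatten.1 hnd).2
  have hblknd := (List.nodup_flatten.1 hnd).1
  refine ⟨?_, ?_, ?_, ?_⟩
  · rw [List.toFinset_card_of_nodup hndL, hlen]
  · intro l hl
    rw [List.mem_toFinset] at hl
    exact ⟨hblknd l hl, hblk l hl⟩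
  · intro l hl l' hl' hne x hx
    rw [List.mem_toFinset] at hl hl'
    haveI : Std.Symm (@List.Disjoint ℕ) := ⟨fun a b h => h.symm⟩
    exact hpair.forall hl hl' hne hx
  · intro x
    rw [← hcov x, List.mem_flatten]
    simp only [List.mem_toFinset]

/-- The projection from ordered block sequences to partitions. -/
def toPart (m k : ℕ) (L : OrdL m k) : {P : Finset (List ℕ) // IsIOPart m k P} :=
  ⟨L.1.toFinset, isIOPart_toFinset L⟩

/-- Each fiber of `toPart` is equivalent to the orderings of a `k`-element set. -/
noncomputable def fiberEquiv (m k : ℕ) (P : {P : Finset (List ℕ) // IsIOPart m k P}) :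
    {L : OrdL m k // L.1.toFinset = P.1} ≃ (Fin k ≃ {x // x ∈ P.1}) where
  toFun Lh := (finCongr Lh.1.2.1).symm.trans
    ((List.Nodup.getEquiv Lh.1.1 (ordl_nodup Lh.1)).trans
      (Equiv.subtypeEquivRight (fun l => by rw [← List.mem_toFinset, Lh.2])))
  invFun e := by
    have hmem : ∀ b : List ℕ, b ∈ List.ofFn (fun i => (e i).1) ↔ b ∈ P.1 := by
      intro b
      rw [List.mem_ofFn]
      constructor
      · rintro ⟨i, rfl⟩; exact (e i).2
      · intro hb
        obtain ⟨i, hi⟩ := e.surjective ⟨b, hb⟩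
        exact ⟨i, congrArg Subtype.val hi⟩
    have hne : ∀ i j : Fin k, i ≠ j → (e i).1 ≠ (e j).1 := by
      intro i j hij hv
      exact hij (e.injective (Subtype.ext hv))
    refine ⟨⟨List.ofFn (fun i => (e i).1), by simp, ?_, ?_, ?_⟩, ?_⟩
    · intro b hb
      exact (P.2.2.1 b ((hmem b).1 hb)).2
    · rw [List.nodup_flatten]
      constructor
      · intro b hb
        exact (P.2.2.1 b ((hmem b).1 hb)).1
      · rw [List.pairwise_ofFn]
        intro i j hij
        exact P.2.2.2.1 _ (e i).2 _ (e j).2 (hne i j (Fin.ne_of_lt hij))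
    · intro x
      rw [List.mem_flatten, P.2.2.2.2 x]
      constructor
      · rintro ⟨l, hl, hx⟩; exact ⟨l, (hmem l).1 hl, hx⟩
      · rintro ⟨l, hl, hx⟩; exact ⟨l, (hmem l).2 hl, hx⟩
    · ext b
      rw [List.mem_toFinset]
      exact hmem b
  left_inv Lh := by
    apply Subtype.ext
    apply Subtype.ext
    apply List.ext_get
    · simp [Lh.1.2.1]
    · intro i h1 h2
      simp [List.get_ofFn, List.Nodup.getEquiv]
      rfl
  right_inv e := by
    apply Equiv.ext
    intro i
    apply Subtype.ext
    simp only [Equiv.trans_apply, Equiv.subtypeEquivRight_apply, List.Nodup.getEquiv,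
      Equiv.coe_fn_mk, List.get_ofFn]
    congr 1

/-- The key counting identity. -/
lemma key_count (m k t : ℕ) (hm : m = 2 * k + t) :
    Nat.card {P : Finset (List ℕ) // IsIOPart m k P} * k.factorial
      = m.factorial * (k + t - 1).choose t := by
  classical
  have bigEquiv : OrdL m k ≃ {P : Finset (List ℕ) // IsIOPart m k P} × (Fin k ≃ Fin k) :=
    (Equiv.sigmaFiberEquiv (toPart m k)).symm.trans
      ((Equiv.sigmaCongrRight (fun P =>
        ((Equiv.subtypeEquivRight (fun L => Subtype.ext_iff)).trans
          ((fiberEquiv m k P).trans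
            (Equiv.equivCongr (Equiv.refl (Fin k))
              (P.1.equivFin.trans (finCongr P.2.1))))))).trans
        (Equiv.sigmaEquivProd _ _))
  have h1 : Nat.card (OrdL m k) = m.factorial * (k + t - 1).choose t := by
    rw [Nat.card_congr (ordEquivProd m k), Nat.card_prod, card_PermL, hm, card_CompL]
  have h2 : Nat.card (OrdL m k)
      = Nat.card {P : Finset (List ℕ) // IsIOPart m k P} * k.factorial := by
    rw [Nat.card_congr bigEquiv, Nat.card_prod,
      Nat.card_eq_fintype_card (α := Fin k ≃ Fin k),
      Fintype.card_equiv (Equiv.refl _), Fintype.card_fin]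
  rw [← h2, h1]

end IOPartAux

/-- The number of admissible internally ordered `k`-partitions of `{1,...,n+k-1}`
is `(1/k) · n! · C(n-2,k-1) · C(n+k-1,k-1)` (stated multiplicatively). -/
theorem stmt3 (n k : ℕ) (hn : 2 ≤ n) (hk1 : 1 ≤ k) (hk : k ≤ n - 1) :
    k * Nat.card {P : Finset (List ℕ) // IsIOPart (n + k - 1) k P} =
      n.factorial * (n - 2).choose (k - 1) * (n + k - 1).choose (k - 1) := by
  have hm : n + k - 1 = 2 * k + (n - 1 - k) := by omega
  have hkey := IOPartAux.key_count (n + k - 1) k (n - 1 - k) hm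
  have hc : (k + (n - 1 - k) - 1).choose (n - 1 - k) = (n - 2).choose (k - 1) := by
    have h1 : k + (n - 1 - k) - 1 = n - 2 := by omega
    have h2 : n - 1 - k = (n - 2) - (k - 1) := by omega
    rw [h1, h2, Nat.choose_symm (by omega)]
  rw [hc] at hkey
  have hfac : k.factorial = k * (k - 1).factorial :=
    (Nat.mul_factorial_pred (by omega)).symm
  have hmf : (n + k - 1).choose (k - 1) * (k - 1).factorial * n.factorial
      = (n + k - 1).factorial := by
    have h := Nat.choose_mul_factorial_mul_factorial (n := n + k - 1) (k := k - 1) (by omega)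
    have h2 : n + k - 1 - (k - 1) = n := by omega
    rw [h2] at h
    exact h
  apply Nat.eq_of_mul_eq_mul_right (Nat.factorial_pos (k - 1))
  calc k * Nat.card {P : Finset (List ℕ) // IsIOPart (n + k - 1) k P} * (k - 1).factorial
      = Nat.card {P : Finset (List ℕ) // IsIOPart (n + k - 1) k P} * k.factorial := by
        rw [hfac]; ring
    _ = (n + k - 1).factorial * (n - 2).choose (k - 1) := hkey
    _ = n.factorial * (n - 2).choose (k - 1) * (n + k - 1).choose (k - 1)
        * (k - 1).factorial := by rw [← hmf]; ring
end
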